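/- Let α be a nonnegative random variable with finite expectation and continuous CDF F, let n ≥ 2, T ≥ 0, c ≥ 0, k_n = (n+1)T + c, r_L^n = α_L − k_n, r_H^n = α_H − k_n, and assume r_H^n > 0. Define the supplier's expected payoff U_n(r) = (n/(n+1))·r·E[(α − k_n − r)⁺] for r ≥ 0. Then: (A) if r* maximizes U_n over [0,∞) with U_n(r*) > 0, then r* ∈ (0, r_H^n) and r* = m(r* + k_n); (B) if F is DMRL, then the equation r = m(r + k_n) has a unique solution r* in (0, r_H^n), this r* is the unique global maximizer of U_n over [0,∞), and if moreover E(α) − α_L ≤ α_L − (n+1)T − c (= r_L^n) then r* = (1/2)(E(α) − (n+1)T − c), while if E(α) − α_L > r_L^n then r* ∈ ((r_L^n)⁺, r_H^n). -/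

import Mathlib

set_option maxHeartbeats 1000000
set_option linter.unusedSectionVars false
set_option linter.unusedVariables false


open MeasureTheory Set

/-- The cumulative distribution function of a distribution `μ` on `ℝ`. -/
noncomputable def cdfR (μ : Measure ℝ) (t : ℝ) : ℝ := (μ (Iic t)).toReal

/-- The mean residual lifetime function `m(t) = E[α − t ∣ α > t]` (with value `0` when
`P(α > t) = 0`, using the junk-value convention `x / 0 = 0`). -/
noncomputable def mrl (μ : Measure ℝ) (t : ℝ) : ℝ :=
  (∫ x, max (x - t) 0 ∂μ) / (μ (Ioi t)).toReal

namespace Stmt19Aux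
open Filter Topology

variable (μ : Measure ℝ) [IsProbabilityMeasure μ]

/-- survival function -/
noncomputable def Gbar (t : ℝ) : ℝ := (μ (Ioi t)).toReal

/-- stop-loss transform -/
noncomputable def Gsl (t : ℝ) : ℝ := ∫ x, max (x - t) 0 ∂μ

variable {μ}

lemma Gbar_nonneg (t : ℝ) : 0 ≤ Gbar μ t := ENNReal.toReal_nonneg

lemma Gbar_le_one (t : ℝ) : Gbar μ t ≤ 1 := by
  have := prob_le_one (μ := μ) (s := Ioi t)
  simpa [Gbar] using ENNReal.toReal_le_of_le_ofReal zero_le_one (by simpa using this)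

lemma Gsl_integrable (hint : Integrable id μ) (t : ℝ) :
    Integrable (fun x => max (x - t) 0) μ :=
  (hint.sub (integrable_const t)).pos_part

lemma Gsl_nonneg (t : ℝ) : 0 ≤ Gsl μ t :=
  integral_nonneg fun x => le_max_right _ _

lemma Gsl_bounds (hint : Integrable id μ) {s u : ℝ} (h : s ≤ u) :
    (u - s) * Gbar μ u ≤ Gsl μ s - Gsl μ u ∧ Gsl μ s - Gsl μ u ≤ (u - s) * Gbar μ s := by
  have hIs := Gsl_integrable hint s
  have hIu := Gsl_integrable hint u
  have hdiff : Gsl μ s - Gsl μ u = ∫ x, (max (x - s) 0 - max (x - u) 0) ∂μ :=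
    (integral_sub hIs hIu).symm
  constructor
  · have hmono : ∀ x : ℝ, (Ioi u).indicator (fun _ => u - s) x
        ≤ max (x - s) 0 - max (x - u) 0 := by
      intro x
      by_cases hx : x ∈ Ioi u
      · simp only [indicator_of_mem hx]
        have hx' : u < x := hx
        rw [max_eq_left (by linarith), max_eq_left (by linarith)]
        linarith
      · simp only [indicator_of_notMem hx]
        have : max (x - u) 0 ≤ max (x - s) 0 :=
          max_le_max (by linarith) le_rfl
        linarith
    have hint_ind : Integrable ((Ioi u).indicator (fun _ => u - s)) μ :=
      (integrable_const (u - s)).indicator measurableSet_Ioi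
    have := integral_mono hint_ind (hIs.sub hIu) hmono
    simp only [Pi.sub_apply] at this
    rwa [integral_indicator_const _ measurableSet_Ioi, smul_eq_mul, mul_comm, ← hdiff] at this
  · have hmono : ∀ x : ℝ, max (x - s) 0 - max (x - u) 0
        ≤ (Ioi s).indicator (fun _ => u - s) x := by
      intro x
      by_cases hx : x ∈ Ioi s
      · simp only [indicator_of_mem hx]
        have hx' : s < x := hx
        rcases le_or_gt x u with hxu | hxu
        · rw [max_eq_left (by linarith), max_eq_right (by linarith)]
          linarith
        · rw [max_eq_left (by linarith), max_eq_left (by linarith)]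
          linarith
      · simp only [indicator_of_notMem hx]
        have hxs : x ≤ s := le_of_not_gt hx
        rw [max_eq_right (by linarith), max_eq_right (by linarith)]
        linarith
    have hint_ind : Integrable ((Ioi s).indicator (fun _ => u - s)) μ :=
      (integrable_const (u - s)).indicator measurableSet_Ioi
    have := integral_mono (hIs.sub hIu) hint_ind hmono
    simp only [Pi.sub_apply] at this
    rwa [integral_indicator_const _ measurableSet_Ioi, smul_eq_mul, mul_comm, ← hdiff] at this


lemma continuousAt_cdf (hcont : ∀ t : ℝ, μ {t} = 0) (a : ℝ) :
    ContinuousAt (ProbabilityTheory.cdf μ) a := by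
  rw [(ProbabilityTheory.monotone_cdf μ).continuousAt_iff_leftLim_eq_rightLim,
    StieltjesFunction.rightLim_eq]
  have h1 : (ProbabilityTheory.cdf μ).measure {a} = 0 := by
    rw [ProbabilityTheory.measure_cdf]; exact hcont a
  rw [StieltjesFunction.measure_singleton] at h1
  have h2 := (ProbabilityTheory.monotone_cdf μ).leftLim_le (le_refl a)
  have h3 : ProbabilityTheory.cdf μ a - Function.leftLim (ProbabilityTheory.cdf μ) a ≤ 0 := by
    by_contra h
    push_neg at h
    exact (ENNReal.ofReal_pos.2 h).ne' h1
  linarith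

lemma Gbar_eq (t : ℝ) : Gbar μ t = 1 - (μ (Iic t)).toReal := by
  have h1 : μ (Ioi t) = 1 - μ (Iic t) := by
    rw [← compl_Iic, measure_compl measurableSet_Iic (measure_ne_top μ _), measure_univ]
  rw [Gbar, h1, ENNReal.toReal_sub_of_le prob_le_one ENNReal.one_ne_top, ENNReal.toReal_one]

lemma Gbar_continuous (hcont : ∀ t : ℝ, μ {t} = 0) : Continuous (Gbar μ) := by
  have hcdf : Continuous (ProbabilityTheory.cdf μ) :=
    continuous_iff_continuousAt.2 (continuousAt_cdf hcont)
  have : Continuous fun t => 1 - ProbabilityTheory.cdf μ t := continuous_const.sub hcdf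
  refine this.congr fun t => ?_
  rw [Gbar_eq, ProbabilityTheory.cdf_eq_real, measureReal_def]

lemma Gsl_hasDerivAt (hint : Integrable id μ) (hcont : ∀ t : ℝ, μ {t} = 0) (t : ℝ) :
    HasDerivAt (Gsl μ) (-(Gbar μ t)) t := by
  rw [hasDerivAt_iff_tendsto_slope, tendsto_iff_dist_tendsto_zero]
  have hbound : ∀ y : ℝ, y ≠ t →
      dist (slope (Gsl μ) t y) (-(Gbar μ t)) ≤ dist (Gbar μ y) (Gbar μ t) := by
    intro y hy
    have hslope : slope (Gsl μ) t y = (Gsl μ y - Gsl μ t) / (y - t) := by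
      rw [slope_def_field]
    rw [Real.dist_eq, Real.dist_eq, hslope, sub_neg_eq_add]
    rcases lt_or_gt_of_ne hy with hlt | hgt
    · obtain ⟨h1, h2⟩ := Gsl_bounds hint hlt.le
      have hyt : y - t < 0 := by linarith
      have hGle : Gbar μ t ≤ Gbar μ y :=
        ENNReal.toReal_mono (measure_ne_top μ _) (measure_mono (Ioi_subset_Ioi hlt.le))
      have hA : (Gsl μ y - Gsl μ t) / (y - t) ≤ -(Gbar μ t) := by
        rw [div_le_iff_of_neg hyt]; nlinarith
      have hB : -(Gbar μ y) ≤ (Gsl μ y - Gsl μ t) / (y - t) := by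
        rw [le_div_iff_of_neg hyt]; nlinarith
      calc |((Gsl μ y - Gsl μ t) / (y - t)) + Gbar μ t| ≤ Gbar μ y - Gbar μ t :=
            abs_le.2 ⟨by linarith, by linarith⟩
        _ ≤ |Gbar μ y - Gbar μ t| := le_abs_self _
    · obtain ⟨h1, h2⟩ := Gsl_bounds hint hgt.le
      have hyt : (0:ℝ) < y - t := by linarith
      have hGle : Gbar μ y ≤ Gbar μ t :=
        ENNReal.toReal_mono (measure_ne_top μ _) (measure_mono (Ioi_subset_Ioi hgt.le))
      have hA : -(Gbar μ t) ≤ (Gsl μ y - Gsl μ t) / (y - t) := by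
        rw [le_div_iff₀ hyt]; nlinarith
      have hB : (Gsl μ y - Gsl μ t) / (y - t) ≤ -(Gbar μ y) := by
        rw [div_le_iff₀ hyt]; nlinarith
      calc |((Gsl μ y - Gsl μ t) / (y - t)) + Gbar μ t| ≤ Gbar μ t - Gbar μ y :=
            abs_le.2 ⟨by linarith, by linarith⟩
        _ ≤ |Gbar μ y - Gbar μ t| := by rw [abs_sub_comm]; exact le_abs_self _
  have htend : Tendsto (fun y => dist (Gbar μ y) (Gbar μ t)) (nhdsWithin t {t}ᶜ) (nhds 0) := by
    have h := ((Gbar_continuous hcont).tendsto t).mono_left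
      (nhdsWithin_le_nhds (s := ({t}ᶜ : Set ℝ)))
    have := h.dist (tendsto_const_nhds (x := Gbar μ t))
    simpa using this
  refine squeeze_zero' (Eventually.of_forall fun y => dist_nonneg) ?_ htend
  filter_upwards [self_mem_nhdsWithin] with y hy
  exact hbound y hy


lemma measure_Ioi_eq_zero_iff {t : ℝ} :
    μ (Ioi t) = 0 ↔ essSup (fun x : ℝ => (x : EReal)) μ ≤ (t : EReal) := by
  constructor
  · intro h
    refine essSup_le_of_ae_le _ ?_
    have : ∀ᵐ x ∂μ, x ≤ t := by
      rw [ae_iff]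
      simpa [Ioi] using h
    filter_upwards [this] with x hx
    exact_mod_cast hx
  · intro h
    have hae : ∀ᵐ x : ℝ ∂μ, (x : EReal) ≤ (t : EReal) := by
      filter_upwards [ae_le_essSup (f := fun x : ℝ => (x : EReal)) (μ := μ)] with x hx
      exact hx.trans h
    rw [show Ioi t = {x : ℝ | ¬ x ≤ t} by ext x; simp [Ioi], ← ae_iff]
    filter_upwards [hae] with x hx
    exact_mod_cast hx

lemma Gbar_pos {t : ℝ} (h : (t : EReal) < essSup (fun x : ℝ => (x : EReal)) μ) :
    0 < Gbar μ t := by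
  rw [Gbar, ENNReal.toReal_pos_iff]
  refine ⟨?_, (measure_ne_top μ _).lt_top⟩
  rw [pos_iff_ne_zero]
  intro h0
  exact absurd (measure_Ioi_eq_zero_iff.1 h0) (not_le_of_gt h)

lemma Gsl_pos (hint : Integrable id μ) {t : ℝ}
    (h : (t : EReal) < essSup (fun x : ℝ => (x : EReal)) μ) : 0 < Gsl μ t := by
  obtain ⟨z, hz1, hz2⟩ := exists_between h
  have hzt : z ≠ ⊤ := (hz2.trans_le le_top).ne
  have hzb : z ≠ ⊥ := by
    intro hb; rw [hb] at hz1; exact absurd hz1 (not_lt_bot)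
  set y := z.toReal with hy
  have hzy : z = (y : EReal) := (EReal.coe_toReal hzt hzb).symm
  rw [hzy] at hz1 hz2
  have hty : t < y := by exact_mod_cast hz1
  obtain ⟨h1, _⟩ := Gsl_bounds hint hty.le
  have hGy : 0 < Gbar μ y := Gbar_pos hz2
  have hGsly : 0 ≤ Gsl μ y := Gsl_nonneg y
  nlinarith

lemma Gsl_zero (hint : Integrable id μ) {t : ℝ}
    (h : essSup (fun x : ℝ => (x : EReal)) μ ≤ (t : EReal)) : Gsl μ t = 0 := by
  have hae : ∀ᵐ x : ℝ ∂μ, (x : EReal) ≤ (t : EReal) := by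
    filter_upwards [ae_le_essSup (f := fun x : ℝ => (x : EReal)) (μ := μ)] with x hx
    exact hx.trans h
  have : ∀ᵐ x ∂μ, max (x - t) 0 = 0 := by
    filter_upwards [hae] with x hx
    have : x ≤ t := by exact_mod_cast hx
    simp [max_eq_right, sub_nonpos.2 this]
  rw [Gsl, integral_congr_ae this, integral_zero]

lemma Gsl_le_of_essSup_eq (hint : Integrable id μ) {H t : ℝ}
    (hS : essSup (fun x : ℝ => (x : EReal)) μ = ((H : ℝ) : EReal)) (h : t ≤ H) :
    Gsl μ t ≤ (H - t) * Gbar μ t := by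
  have hae : ∀ᵐ x ∂μ, x ≤ H := by
    filter_upwards [ae_le_essSup (f := fun x : ℝ => (x : EReal)) (μ := μ)] with x hx
    rw [hS] at hx
    exact_mod_cast hx
  have hmono : ∀ᵐ x ∂μ, max (x - t) 0 ≤ (Ioi t).indicator (fun _ => H - t) x := by
    filter_upwards [hae] with x hx
    by_cases hxt : x ∈ Ioi t
    · rw [indicator_of_mem hxt, max_le_iff]
      exact ⟨by linarith, by linarith⟩
    · rw [indicator_of_notMem hxt]
      have : x ≤ t := le_of_not_gt hxt
      rw [max_eq_right (by linarith)]
  have hint_ind : Integrable ((Ioi t).indicator (fun _ => H - t)) μ :=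
    (integrable_const (H - t)).indicator measurableSet_Ioi
  have := integral_mono_ae (Gsl_integrable hint t) hint_ind hmono
  rwa [integral_indicator_const _ measurableSet_Ioi, smul_eq_mul, mul_comm] at this

lemma mrl_eq (t : ℝ) : mrl μ t = Gsl μ t / Gbar μ t := rfl

lemma mrl_pos (hint : Integrable id μ) {t : ℝ}
    (h : (t : EReal) < essSup (fun x : ℝ => (x : EReal)) μ) : 0 < mrl μ t :=
  div_pos (Gsl_pos hint h) (Gbar_pos h)

lemma lt_essSup_of_mrl_ne_zero {t : ℝ} (h : mrl μ t ≠ 0) :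
    (t : EReal) < essSup (fun x : ℝ => (x : EReal)) μ := by
  by_contra hc
  push_neg at hc
  have h0 : μ (Ioi t) = 0 := measure_Ioi_eq_zero_iff.2 hc
  rw [mrl_eq, Gbar, h0] at h
  simp at h

lemma mrl_continuousAt (hint : Integrable id μ) (hcont : ∀ t : ℝ, μ {t} = 0) {t : ℝ}
    (h : (t : EReal) < essSup (fun x : ℝ => (x : EReal)) μ) :
    ContinuousAt (mrl μ) t := by
  have hG : ContinuousAt (Gsl μ) t := (Gsl_hasDerivAt hint hcont t).continuousAt
  have hGb : ContinuousAt (Gbar μ) t := (Gbar_continuous hcont).continuousAt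
  exact hG.div hGb (Gbar_pos h).ne'

lemma U_hasDerivAt (hint : Integrable id μ) (hcont : ∀ t : ℝ, μ {t} = 0) (C k r : ℝ) :
    HasDerivAt (fun r => C * r * Gsl μ (k + r))
      (C * (Gsl μ (k + r) - r * Gbar μ (k + r))) r := by
  have hin : HasDerivAt (fun r : ℝ => k + r) 1 r := by
    simpa using (hasDerivAt_id r).const_add k
  have h1 : HasDerivAt (fun r : ℝ => Gsl μ (k + r)) (-(Gbar μ (k + r)) * 1) r :=
    (Gsl_hasDerivAt hint hcont (k + r)).comp r hin
  have h2 := ((hasDerivAt_id r).mul h1).const_mul C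
  simp only [id_eq, Pi.mul_apply] at h2
  have heq : (fun r => C * (r * Gsl μ (k + r))) = fun r => C * r * Gsl μ (k + r) := by
    funext x; ring
  rw [heq] at h2
  have he2 : C * (1 * Gsl μ (k + r) + r * (-Gbar μ (k + r) * 1))
      = C * (Gsl μ (k + r) - r * Gbar μ (k + r)) := by ring
  rw [he2] at h2
  exact h2

lemma ae_essInf_le_real {αL : ℝ}
    (hαL : essInf (fun x : ℝ => (x : EReal)) μ = (αL : EReal)) :
    ∀ᵐ x ∂μ, αL ≤ x := by
  have := ae_essInf_le (f := fun x : ℝ => (x : EReal)) (μ := μ)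
  rw [hαL] at this
  filter_upwards [this] with x hx
  exact_mod_cast hx

lemma Iic_measure_zero (hcont : ∀ t : ℝ, μ {t} = 0) {αL t : ℝ}
    (hαL : essInf (fun x : ℝ => (x : EReal)) μ = (αL : EReal)) (h : t ≤ αL) :
    μ (Iic t) = 0 := by
  have hae := ae_essInf_le_real hαL
  have h1 : μ (Iio αL) = 0 := by
    rw [show Iio αL = {x : ℝ | ¬ αL ≤ x} by ext x; simp [Iio], ← ae_iff]
    exact hae
  have h2 : μ (Iic αL) = 0 := by
    rw [← Iio_union_right]
    refine le_antisymm ((measure_union_le _ _).trans ?_) zero_le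
    simp [h1, hcont αL]
  exact measure_mono_null (Iic_subset_Iic.2 h) h2

lemma Gbar_of_le_essInf (hcont : ∀ t : ℝ, μ {t} = 0) {αL t : ℝ}
    (hαL : essInf (fun x : ℝ => (x : EReal)) μ = (αL : EReal)) (h : t ≤ αL) :
    Gbar μ t = 1 := by
  rw [Gbar_eq, Iic_measure_zero hcont hαL h]
  simp

lemma Gsl_of_le_essInf (hint : Integrable id μ) {αL t : ℝ}
    (hαL : essInf (fun x : ℝ => (x : EReal)) μ = (αL : EReal)) (h : t ≤ αL) :
    Gsl μ t = (∫ x, x ∂μ) - t := by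
  have hae := ae_essInf_le_real hαL
  have h1 : ∀ᵐ x ∂μ, max (x - t) 0 = x - t := by
    filter_upwards [hae] with x hx
    exact max_eq_left (by linarith)
  have hint' : Integrable (fun x : ℝ => x) μ := hint
  rw [Gsl, integral_congr_ae h1, integral_sub hint' (integrable_const t),
    integral_const]
  simp

end Stmt19Aux

open Stmt19Aux in
/-- The `n`-retailer generalization. With `k_n = (n+1)T + c`,
`r_H^n = α_H − k_n > 0` and `U_n(r) = (n/(n+1))·r·E[(α − k_n − r)⁺]`:
(A) any maximizer `r*` of `U_n` over `[0,∞)` with `U_n(r*) > 0` lies in `(0, r_H^n)` and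
satisfies `r* = m(r* + k_n)`; (B) if `F` is DMRL, then `r = m(r + k_n)` has a unique
solution `r*` in `(0, r_H^n)`, which is the unique global maximizer of `U_n`, equals
`(1/2)(E(α) − k_n)` when `E(α) − α_L ≤ α_L − k_n`, and lies in `((r_L^n)⁺, r_H^n)` when
`E(α) − α_L > α_L − k_n`. -/
theorem stmt19 (μ : Measure ℝ) [IsProbabilityMeasure μ]
    (hnonneg : μ (Iio 0) = 0) (hint : Integrable id μ) (hcont : ∀ t : ℝ, μ {t} = 0)
    (n : ℕ) (hn : 2 ≤ n) (T c : ℝ) (hT : 0 ≤ T) (hc : 0 ≤ c)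
    (k : ℝ) (hk : k = (n + 1 : ℝ)*T + c)
    (αL : ℝ) (hαL : essInf (fun x : ℝ => (x : EReal)) μ = (αL : EReal))
    (rH : EReal) (hrH : rH = essSup (fun x : ℝ => (x : EReal)) μ - (k : EReal))
    (hrHpos : 0 < rH)
    (U : ℝ → ℝ)
    (hU : ∀ r : ℝ, U r = ((n : ℝ)/(n + 1 : ℝ)) * r * ∫ x, max (x - k - r) 0 ∂μ) :
    (∀ rstar : ℝ, 0 ≤ rstar → (∀ r : ℝ, 0 ≤ r → U r ≤ U rstar) → 0 < U rstar →
      (0 < rstar ∧ (rstar : EReal) < rH) ∧ rstar = mrl μ (rstar + k)) ∧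
    (Antitone (mrl μ) →
      ∃ rstar : ℝ, (0 < rstar ∧ (rstar : EReal) < rH) ∧ rstar = mrl μ (rstar + k) ∧
        (∀ r : ℝ, 0 < r → (r : EReal) < rH → r = mrl μ (r + k) → r = rstar) ∧
        (∀ r : ℝ, 0 ≤ r → r ≠ rstar → U r < U rstar) ∧
        ((∫ x, x ∂μ) - αL ≤ αL - k → rstar = (1/2) * ((∫ x, x ∂μ) - k)) ∧
        (αL - k < (∫ x, x ∂μ) - αL → max (αL - k) 0 < rstar)) := by

  set S := essSup (fun x : ℝ => (x : EReal)) μ with hSdef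
  set C := (n : ℝ)/(n + 1 : ℝ) with hCdef
  have hn0 : (0:ℝ) < n := by exact_mod_cast lt_of_lt_of_le two_pos hn
  have hC : 0 < C := div_pos hn0 (by linarith)
  have hUeq : U = fun r => C * r * Gsl μ (k + r) := by
    funext r
    rw [hU r]
    congr 1
    simp only [Gsl, sub_sub]
  have hkS : (k : EReal) < S := by
    rw [hrH] at hrHpos
    have := (EReal.lt_sub_iff_add_lt (Or.inl (EReal.coe_ne_bot k))
      (Or.inl (EReal.coe_ne_top k))).1 hrHpos
    simpa using this
  have hcoe : ∀ r : ℝ, ((k + r : ℝ) : EReal) < S ↔ (r : EReal) < rH := by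
    intro r
    rw [hrH, EReal.lt_sub_iff_add_lt (Or.inl (EReal.coe_ne_bot k))
      (Or.inl (EReal.coe_ne_top k)), ← EReal.coe_add, add_comm r k]
  have hcontU : Continuous U := by
    rw [hUeq]
    exact continuous_iff_continuousAt.2 fun x => (U_hasDerivAt hint hcont C k x).continuousAt
  have hderivU : ∀ x : ℝ, deriv U x = C * (Gsl μ (k + x) - x * Gbar μ (k + x)) := by
    intro x
    rw [hUeq]
    exact (U_hasDerivAt hint hcont C k x).deriv
  have hGeq : ∀ x : ℝ, 0 < Gbar μ (k + x) →
      Gsl μ (k + x) = mrl μ (x + k) * Gbar μ (k + x) := by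
    intro x hGb
    rw [mrl_eq, add_comm x k, div_mul_cancel₀ _ hGb.ne']
  constructor
  · -- Part A
    rintro rstar h0 hmax hpos
    rw [hUeq] at hpos
    simp only [] at hpos
    have hGsl_nn := Gsl_nonneg (μ := μ) (k + rstar)
    have hrpos : 0 < rstar := by
      rcases h0.lt_or_eq with h | h
      · exact h
      · exfalso; rw [← h] at hpos; simp at hpos
    have hGpos : 0 < Gsl μ (k + rstar) := by
      rcases hGsl_nn.lt_or_eq with h | h
      · exact h
      · exfalso; rw [← h] at hpos; simp at hpos
    have hkr : ((k + rstar : ℝ) : EReal) < S := by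
      by_contra hcc
      push_neg at hcc
      rw [Gsl_zero hint hcc] at hGpos
      exact lt_irrefl _ hGpos
    have hGbar : 0 < Gbar μ (k + rstar) := Gbar_pos hkr
    refine ⟨⟨hrpos, (hcoe rstar).1 hkr⟩, ?_⟩
    have hloc : IsLocalMax U rstar := by
      filter_upwards [eventually_gt_nhds hrpos] with r hr
      exact hmax r hr.le
    have hder := U_hasDerivAt (μ := μ) hint hcont C k rstar
    rw [← hUeq] at hder
    have h0' := hloc.hasDerivAt_eq_zero hder
    have hz : Gsl μ (k + rstar) - rstar * Gbar μ (k + rstar) = 0 := by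
      rcases mul_eq_zero.1 h0' with h | h
      · exact absurd h hC.ne'
      · exact h
    rw [add_comm rstar k, mrl_eq, eq_div_iff hGbar.ne']
    linarith
  · -- Part B
    intro hm
    have hφ : ∀ a b : ℝ, a < b → mrl μ (b + k) - b < mrl μ (a + k) - a := by
      intro a b hab
      have := hm (show a + k ≤ b + k by linarith)
      linarith
    have hmk : 0 < mrl μ k := mrl_pos hint hkS
    have hStop_or : S = ⊤ ∨ ∃ H : ℝ, S = (H : EReal) := by
      by_cases htop : S = ⊤
      · exact Or.inl htop
      · refine Or.inr ⟨S.toReal, ?_⟩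
        have hbot : S ≠ ⊥ := by
          intro hb
          rw [hb] at hkS
          exact absurd hkS (by simp)
        exact (EReal.coe_toReal htop hbot).symm
    have hφcont : ∀ t : ℝ, ((t + k : ℝ) : EReal) < S →
        ContinuousAt (fun r : ℝ => mrl μ (r + k) - r) t := by
      intro t ht
      have hf : ContinuousAt (fun r : ℝ => r + k) t :=
        (continuous_id.add continuous_const).continuousAt
      have h1 := ContinuousAt.comp (g := mrl μ) (f := fun r : ℝ => r + k)
        (mrl_continuousAt hint hcont ht) hf
      exact ContinuousAt.sub h1 continuousAt_id
    obtain ⟨b, hb0, hφb, hcφ⟩ :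
        ∃ b : ℝ, 0 < b ∧ mrl μ (b + k) - b ≤ 0 ∧
          ContinuousOn (fun r : ℝ => mrl μ (r + k) - r) (Icc 0 b) := by
      rcases hStop_or with hTop | ⟨H, hH⟩
      · refine ⟨mrl μ k + 1, by linarith, ?_, ?_⟩
        · have h2 : mrl μ ((mrl μ k + 1) + k) ≤ mrl μ k := hm (by linarith)
          linarith
        · intro t _
          exact (hφcont t (by rw [hTop]; exact EReal.coe_lt_top _)).continuousWithinAt
      · have hkH : k < H := by
          rw [hH] at hkS
          exact_mod_cast hkS
        refine ⟨(3/4)*(H - k), by linarith, ?_, ?_⟩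
        · set b := (3/4)*(H - k) with hbdef
          have hbk : b + k < H := by rw [hbdef]; linarith
          have hGb : 0 < Gbar μ (b + k) := Gbar_pos (by rw [← hSdef, hH]; exact_mod_cast hbk)
          have hH' : essSup (fun x : ℝ => (x : EReal)) μ = ((H : ℝ) : EReal) := by
            rw [← hSdef]; exact hH
          have hle := Gsl_le_of_essSup_eq hint hH' hbk.le
          have hmle : mrl μ (b + k) ≤ H - (b + k) := by
            rw [mrl_eq, div_le_iff₀ hGb]
            exact hle
          rw [hbdef] at hmle ⊢
          linarith
        · intro t ht
          have htk : t + k < H := by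
            have := ht.2
            linarith [ht.1]
          exact (hφcont t (by rw [hH]; exact_mod_cast htk)).continuousWithinAt
    have h0mem : (0:ℝ) ∈ Icc ((fun r : ℝ => mrl μ (r + k) - r) b)
        ((fun r : ℝ => mrl μ (r + k) - r) 0) := by
      constructor
      · exact hφb
      · simp only [zero_add, sub_zero]
        exact hmk.le
    obtain ⟨rstar, hrmem, hroot⟩ := intermediate_value_Icc' hb0.le hcφ h0mem
    simp only at hroot
    have hroot' : rstar = mrl μ (rstar + k) := by linarith [hroot]
    have hrpos : 0 < rstar := by
      rcases hrmem.1.lt_or_eq with h | h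
      · exact h
      · exfalso
        rw [← h] at hroot
        simp only [zero_add, sub_zero] at hroot
        rw [hroot] at hmk
        exact lt_irrefl _ hmk
    have hkrS : ((k + rstar : ℝ) : EReal) < S := by
      have hne : mrl μ (rstar + k) ≠ 0 := by rw [← hroot']; exact hrpos.ne'
      have := lt_essSup_of_mrl_ne_zero hne
      rw [add_comm rstar k] at this
      exact this
    have hrH' : (rstar : EReal) < rH := (hcoe rstar).1 hkrS
    have huniq : ∀ r : ℝ, r = mrl μ (r + k) → r = rstar := by
      intro r hr
      by_contra hne
      have hφr : mrl μ (r + k) - r = 0 := by rw [← hr]; ring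
      rcases lt_or_gt_of_ne hne with h | h
      · have := hφ r rstar h
        rw [hφr] at this
        linarith
      · have := hφ rstar r h
        rw [hφr] at this
        linarith
    refine ⟨rstar, ⟨hrpos, hrH'⟩, hroot', fun r _ _ hr => huniq r hr, ?_, ?_, ?_⟩
    · -- global max
      have hUpos : 0 < U rstar := by
        rw [hUeq]
        exact mul_pos (mul_pos hC hrpos) (Gsl_pos hint hkrS)
      have hsignpos : ∀ x ∈ Ioo 0 rstar, 0 < deriv U x := by
        intro x hx
        have hxS : ((k + x : ℝ) : EReal) < S :=
          lt_trans (by exact_mod_cast (show k + x < k + rstar by linarith [hx.2])) hkrS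
        have hGb : 0 < Gbar μ (k + x) := Gbar_pos hxS
        have hφx : 0 < mrl μ (x + k) - x := by
          have := hφ x rstar hx.2
          have hφstar : mrl μ (rstar + k) - rstar = 0 := by rw [← hroot']; ring
          rw [hφstar] at this
          linarith
        rw [hderivU x, hGeq x hGb]
        nlinarith [mul_pos (mul_pos hC hφx) hGb]
      have hmono : StrictMonoOn U (Icc 0 rstar) := by
        refine strictMonoOn_of_deriv_pos (convex_Icc 0 rstar) hcontU.continuousOn ?_
        intro x hx
        rw [interior_Icc] at hx
        exact hsignpos x hx
      have hsignneg : ∀ x : ℝ, rstar < x → ((k + x : ℝ) : EReal) < S → deriv U x < 0 := by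
        intro x hx hxS
        have hGb : 0 < Gbar μ (k + x) := Gbar_pos hxS
        have hφx : mrl μ (x + k) - x < 0 := by
          have := hφ rstar x hx
          have hφstar : mrl μ (rstar + k) - rstar = 0 := by rw [← hroot']; ring
          rw [hφstar] at this
          linarith
        rw [hderivU x, hGeq x hGb]
        have hy : (0:ℝ) < x - mrl μ (x + k) := by linarith
        have hkey : 0 < C * ((x - mrl μ (x + k)) * Gbar μ (k + x)) :=
          mul_pos hC (mul_pos hy hGb)
        nlinarith [hkey]
      intro r hr0 hrne
      rcases lt_trichotomy r rstar with hlt | heq | hgt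
      · exact hmono ⟨hr0, hlt.le⟩ ⟨hrpos.le, le_rfl⟩ hlt
      · exact absurd heq hrne
      · rcases hStop_or with hTop | ⟨H, hH⟩
        · have hanti : StrictAntiOn U (Ici rstar) := by
            refine strictAntiOn_of_deriv_neg (convex_Ici rstar) hcontU.continuousOn ?_
            intro x hx
            rw [interior_Ici] at hx
            exact hsignneg x hx (by rw [hTop]; exact EReal.coe_lt_top _)
          exact hanti (self_mem_Ici) (le_of_lt hgt) hgt
        · have hrstarB : rstar < H - k := by
            have h2 := hrH'
            rw [hrH, hH, ← EReal.coe_sub] at h2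
            exact_mod_cast h2
          rcases le_or_gt r (H - k) with hrB | hrB
          · have hanti : StrictAntiOn U (Icc rstar (H - k)) := by
              refine strictAntiOn_of_deriv_neg (convex_Icc _ _) hcontU.continuousOn ?_
              intro x hx
              rw [interior_Icc] at hx
              refine hsignneg x hx.1 ?_
              rw [hH]
              exact_mod_cast (show k + x < H by linarith [hx.2])

            exact hanti ⟨le_rfl, hrstarB.le⟩ ⟨hgt.le, hrB⟩ hgt
          · have hU0 : U r = 0 := by
              rw [hUeq]
              have : Gsl μ (k + r) = 0 := by
                refine Gsl_zero hint ?_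
                rw [← hSdef, hH]
                exact_mod_cast (show H ≤ k + r by linarith)
              simp [this]
            linarith
    · -- special case 1
      intro hle
      set E := ∫ x, x ∂μ with hEdef
      have ht0 : (1/2) * (E - k) + k ≤ αL := by linarith
      have hGb := Gbar_of_le_essInf hcont hαL ht0
      have hGs := Gsl_of_le_essInf hint hαL ht0
      have hfix : (1/2) * (E - k) = mrl μ ((1/2) * (E - k) + k) := by
        rw [mrl_eq, hGb, hGs, div_one]
        ring
      exact (huniq _ hfix).symm
    · -- special case 2
      intro hlt2
      have key : 0 < mrl μ (max (αL - k) 0 + k) - max (αL - k) 0 := by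
        rcases le_total αL k with h1 | h1
        · rw [max_eq_right (by linarith)]
          simpa using hmk
        · rw [max_eq_left (by linarith)]
          have hGb := Gbar_of_le_essInf hcont hαL (le_refl αL)
          have hGs := Gsl_of_le_essInf hint hαL (le_refl αL)
          have harg : αL - k + k = αL := by ring
          rw [harg, mrl_eq, hGb, hGs, div_one]
          linarith
      by_contra hcc
      push_neg at hcc
      have hφstar : mrl μ (rstar + k) - rstar = 0 := by rw [← hroot']; ring
      rcases hcc.lt_or_eq with h | h
      · have := hφ rstar (max (αL - k) 0) h
        rw [hφstar] at this
        linarith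
      · rw [h] at hφstar
        linarith
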